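/- Let $\varepsilon$ be a real number with $|\varepsilon|<1$ and let $v:[0,1]\to\mathbb{R}$ be twice continuously differentiable with $v(0)=v(1)=0$. Then $$\int_0^1\bigl(-v''(x)+\varepsilon\,v''(1-x)\bigr)v(x)\,dx\;\geq\;(1-|\varepsilon|)\,\pi^2\int_0^1 v(x)^2\,dx.$$ -/

import Mathlib

open Real MeasureTheory

section Aux
open Set Filter Topology intervalIntegral

lemma wirtinger_key (v v' : ℝ → ℝ)
    (hv : ∀ x ∈ Set.Icc (0:ℝ) 1, HasDerivAt v (v' x) x)
    (hv'c : ContinuousOn v' (Set.Icc (0:ℝ) 1))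
    (a b : ℝ) (ha : 0 < a) (hab : a ≤ b) (hb1 : b < 1) :
    π * ((v b ^ 2 * (Real.cos (π * b) / Real.sin (π * b)))
        - (v a ^ 2 * (Real.cos (π * a) / Real.sin (π * a))))
      ≤ ∫ x in a..b, (v' x ^ 2 - π ^ 2 * v x ^ 2) := by
  have hvc : ContinuousOn v (Set.Icc (0:ℝ) 1) :=
    fun x hx => (hv x hx).continuousAt.continuousWithinAt
  have hsub : Set.Icc a b ⊆ Set.Icc (0:ℝ) 1 :=
    Set.Icc_subset_Icc ha.le hb1.le
  have hsin : ∀ x ∈ Set.Icc a b, Real.sin (π * x) ≠ 0 := by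
    intro x hx
    have h1 : 0 < π * x := mul_pos Real.pi_pos (lt_of_lt_of_le ha hx.1)
    have h2 : π * x < π := by
      nlinarith [Real.pi_pos, hx.2]
    exact (Real.sin_pos_of_pos_of_lt_pi h1 h2).ne'
  set F : ℝ → ℝ := fun x => v x ^ 2 * (Real.cos (π * x) / Real.sin (π * x)) with hF
  set F' : ℝ → ℝ := fun x =>
    2 * v x * v' x * (Real.cos (π * x) / Real.sin (π * x))
      + v x ^ 2 * (-π / Real.sin (π * x) ^ 2) with hF'
  have huIcc : Set.uIcc a b = Set.Icc a b := Set.uIcc_of_le hab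
  have hFderiv : ∀ x ∈ Set.uIcc a b, HasDerivAt F (F' x) x := by
    intro x hx
    rw [huIcc] at hx
    have hvx := hv x (hsub hx)
    have hsq : HasDerivAt (fun y => v y ^ 2) (2 * v x * v' x) x := by
      have := hvx.fun_pow 2
      simpa [mul_comm, mul_assoc, mul_left_comm] using this
    have hlin : HasDerivAt (fun y : ℝ => π * y) π x := by
      simpa using (hasDerivAt_id x).const_mul π
    have hcos : HasDerivAt (fun y : ℝ => Real.cos (π * y)) (-Real.sin (π * x) * π) x :=
      hlin.cos
    have hsinD : HasDerivAt (fun y : ℝ => Real.sin (π * y)) (Real.cos (π * x) * π) x :=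
      hlin.sin
    have hq : HasDerivAt (fun y : ℝ => Real.cos (π * y) / Real.sin (π * y))
        ((-Real.sin (π * x) * π * Real.sin (π * x)
          - Real.cos (π * x) * (Real.cos (π * x) * π)) / Real.sin (π * x) ^ 2) x :=
      hcos.div hsinD (hsin x hx)
    have hq' : ((-Real.sin (π * x) * π * Real.sin (π * x)
          - Real.cos (π * x) * (Real.cos (π * x) * π)) / Real.sin (π * x) ^ 2)
        = -π / Real.sin (π * x) ^ 2 := by
      have hcs := Real.sin_sq_add_cos_sq (π * x)
      have : (-Real.sin (π * x) * π * Real.sin (π * x)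
          - Real.cos (π * x) * (Real.cos (π * x) * π)) = -π := by
        linear_combination (-π) * hcs
      rw [this]
    rw [hq'] at hq
    simpa [hF, hF'] using hsq.fun_mul hq
  have hF'cont : ContinuousOn F' (Set.Icc a b) := by
    apply ContinuousOn.add
    · exact ((continuousOn_const.mul (hvc.mono hsub)).mul (hv'c.mono hsub)).mul
        ((Real.continuous_cos.comp (continuous_const.mul continuous_id)).continuousOn.div
          (Real.continuous_sin.comp (continuous_const.mul continuous_id)).continuousOn hsin)
    · exact ((hvc.mono hsub).pow 2).mul
        (continuousOn_const.div
          (((Real.continuous_sin.comp (continuous_const.mul continuous_id)).pow 2).continuousOn)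
          (fun x hx => pow_ne_zero 2 (hsin x hx)))
  have hF'int : IntervalIntegrable F' volume a b := by
    rw [intervalIntegrable_iff_integrableOn_Icc_of_le hab] at *
    exact hF'cont.integrableOn_compact isCompact_Icc
  have hgcont : ContinuousOn (fun x => v' x ^ 2 - π ^ 2 * v x ^ 2) (Set.Icc a b) :=
    ((hv'c.mono hsub).pow 2).sub (continuousOn_const.mul ((hvc.mono hsub).pow 2))
  have hgint : IntervalIntegrable (fun x => v' x ^ 2 - π ^ 2 * v x ^ 2) volume a b := by
    rw [intervalIntegrable_iff_integrableOn_Icc_of_le hab]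
    exact hgcont.integrableOn_compact isCompact_Icc
  have ftc : ∫ x in a..b, F' x = F b - F a :=
    intervalIntegral.integral_eq_sub_of_hasDerivAt hFderiv hF'int
  have hpt : ∀ x ∈ Set.Icc a b,
      0 ≤ (v' x ^ 2 - π ^ 2 * v x ^ 2) - π * F' x := by
    intro x hx
    have hs := hsin x hx
    have hcs := Real.sin_sq_add_cos_sq (π * x)
    have : (v' x ^ 2 - π ^ 2 * v x ^ 2) - π * F' x
        = (v' x - π * v x * (Real.cos (π * x) / Real.sin (π * x))) ^ 2 := by
      simp only [hF']
      have hs2 : Real.sin (π * x) ^ 2 ≠ 0 := pow_ne_zero 2 hs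
      field_simp
      linear_combination (-(π ^ 2 * v x ^ 2)) * hcs
    rw [this]
    positivity
  have hnonneg : 0 ≤ ∫ x in a..b, ((v' x ^ 2 - π ^ 2 * v x ^ 2) - π * F' x) := by
    apply intervalIntegral.integral_nonneg hab
    intro x hx
    exact hpt x hx
  rw [intervalIntegral.integral_sub hgint (hF'int.const_mul π)] at hnonneg
  rw [intervalIntegral.integral_const_mul, ftc] at hnonneg
  simp only [hF] at hnonneg
  linarith

lemma sin_ne_zero_small (t : ℝ) (ht0 : t ≠ 0) (ht : |t| < π) : Real.sin t ≠ 0 := by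
  rcases ht0.lt_or_gt with h | h
  · have : 0 < Real.sin (-t) := Real.sin_pos_of_pos_of_lt_pi (by linarith) (by
      rw [abs_of_neg h] at ht; linarith)
    rw [Real.sin_neg] at this
    linarith
  · have : 0 < Real.sin t := Real.sin_pos_of_pos_of_lt_pi h (by
      rw [abs_of_pos h] at ht; exact ht)
    linarith

lemma boundary_limit (v : ℝ → ℝ) (w : ℝ) (c : ℝ) (hc : c = 0 ∨ c = 1)
    (hv : HasDerivAt v w c) (hvc : v c = 0) :
    Filter.Tendsto (fun a : ℝ => v a ^ 2 * (Real.cos (π * a) / Real.sin (π * a)))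
      (𝓝[≠] c) (𝓝 0) := by
  set σ : ℝ := if c = 0 then 1 else -1 with hσ
  have hslope : Filter.Tendsto (slope v c) (𝓝[≠] c) (𝓝 w) :=
    hasDerivAt_iff_tendsto_slope.mp hv
  have hva : Filter.Tendsto v (𝓝[≠] c) (𝓝 0) := by
    have := hv.continuousAt.tendsto
    rw [hvc] at this
    exact this.mono_left nhdsWithin_le_nhds
  have hsin0 : Filter.Tendsto (fun t : ℝ => Real.sin t / t) (𝓝[≠] (0:ℝ)) (𝓝 1) := by
    have h := hasDerivAt_iff_tendsto_slope.mp (Real.hasDerivAt_sin 0)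
    simp only [Real.cos_zero] at h
    refine h.congr ?_
    intro t
    simp [slope_def_field, Real.sin_zero]
  have hmap : Filter.Tendsto (fun a : ℝ => π * (a - c)) (𝓝[≠] c) (𝓝[≠] (0:ℝ)) := by
    apply tendsto_nhdsWithin_of_tendsto_nhds_of_eventually_within
    · have : Filter.Tendsto (fun a : ℝ => π * (a - c)) (𝓝 c) (𝓝 (π * (c - c))) :=
        (tendsto_id.sub_const c).const_mul π
      simpa using this.mono_left nhdsWithin_le_nhds
    · filter_upwards [self_mem_nhdsWithin] with a (ha : a ≠ c)
      have h2 : a - c ≠ 0 := sub_ne_zero.mpr ha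
      simp [Set.mem_compl_iff, mul_ne_zero Real.pi_ne_zero h2]
  have hratio : Filter.Tendsto (fun a : ℝ => (π * (a - c)) / Real.sin (π * (a - c)))
      (𝓝[≠] c) (𝓝 1) := by
    have hinv : Filter.Tendsto (fun t : ℝ => t / Real.sin t) (𝓝[≠] (0:ℝ)) (𝓝 1) := by
      have := hsin0.inv₀ one_ne_zero
      simp only [inv_one] at this
      refine this.congr ?_
      intro t
      rw [inv_div]
    exact hinv.comp hmap
  have hcosl : Filter.Tendsto (fun a : ℝ => Real.cos (π * a) * σ / π) (𝓝[≠] c)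
      (𝓝 (Real.cos (π * c) * σ / π)) :=
    (((Real.continuous_cos.comp (continuous_const.mul continuous_id)).mul
      continuous_const).div_const π).tendsto c |>.mono_left nhdsWithin_le_nhds
  have hprod := ((hslope.mul hva).mul hratio).mul hcosl
  simp only [mul_zero, zero_mul] at hprod
  refine hprod.congr' ?_
  have hmem : {a : ℝ | |a - c| < 1} ∈ 𝓝[≠] c := by
    apply nhdsWithin_le_nhds
    have hb : Metric.ball c 1 ∈ 𝓝 c := Metric.ball_mem_nhds c one_pos
    refine Filter.mem_of_superset hb ?_
    intro a ha
    simpa [Real.dist_eq] using ha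
  filter_upwards [self_mem_nhdsWithin, hmem] with a hne hball
  have hne' : a ≠ c := hne
  have hac : a - c ≠ 0 := sub_ne_zero.mpr hne'
  have hball' : |a - c| < 1 := hball
  have hs' : Real.sin (π * (a - c)) ≠ 0 := by
    apply sin_ne_zero_small
    · exact mul_ne_zero Real.pi_ne_zero hac
    · rw [abs_mul, abs_of_pos Real.pi_pos]
      nlinarith [Real.pi_pos, abs_nonneg (a - c)]
  rcases hc with rfl | rfl
  · have ha0 : a ≠ 0 := by simpa using hne'
    simp only [hσ, if_pos rfl, if_true, slope_def_field, hvc, sub_zero, mul_one]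
    rw [sub_zero] at hs'
    field_simp
  · have ha1 : a - 1 ≠ 0 := by simpa using hac
    have hσ1 : σ = -1 := by simp [hσ]
    have hsin_eq : Real.sin (π * (a - 1)) = -Real.sin (π * a) := by
      rw [show π * (a - 1) = π * a - π by ring, Real.sin_sub_pi]
    have hs2 : Real.sin (π * a) ≠ 0 := by
      rw [hsin_eq] at hs'
      simpa using hs'
    simp only [hσ1, slope_def_field, hvc, sub_zero, hsin_eq]
    field_simp



lemma wirtinger (v v' : ℝ → ℝ)
    (hv : ∀ x ∈ Set.Icc (0:ℝ) 1, HasDerivAt v (v' x) x)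
    (hv'c : ContinuousOn v' (Set.Icc (0:ℝ) 1))
    (hv0 : v 0 = 0) (hv1 : v 1 = 0) :
    π ^ 2 * ∫ x in (0:ℝ)..1, (v x) ^ 2 ≤ ∫ x in (0:ℝ)..1, (v' x) ^ 2 := by
  have hvc : ContinuousOn v (Set.Icc (0:ℝ) 1) :=
    fun x hx => (hv x hx).continuousAt.continuousWithinAt
  set g : ℝ → ℝ := fun x => v' x ^ 2 - π ^ 2 * v x ^ 2 with hg
  have hgcont : ContinuousOn g (Set.Icc (0:ℝ) 1) :=
    (hv'c.pow 2).sub (continuousOn_const.mul (hvc.pow 2))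
  -- integrability of g on [0,1]
  have hgint : IntegrableOn g (Set.uIcc (0:ℝ) 1) volume := by
    rw [Set.uIcc_of_le zero_le_one]
    exact hgcont.integrableOn_compact isCompact_Icc
  -- primitive
  set P : ℝ → ℝ := fun u => ∫ x in (0:ℝ)..u, g x with hP
  have hPc : ContinuousOn P (Set.uIcc (0:ℝ) 1) :=
    intervalIntegral.continuousOn_primitive_interval hgint
  rw [Set.uIcc_of_le zero_le_one] at hPc
  -- maps into Icc
  have hmap0 : Filter.Tendsto (fun a : ℝ => a) (𝓝[>] (0:ℝ)) (𝓝[Set.Icc (0:ℝ) 1] 0) := by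
    apply tendsto_nhdsWithin_of_tendsto_nhds_of_eventually_within
    · exact tendsto_id.mono_left nhdsWithin_le_nhds
    · filter_upwards [Ioo_mem_nhdsGT_of_mem (by norm_num : (0:ℝ) ∈ Set.Ico 0 1)] with a ha
      exact ⟨ha.1.le, ha.2.le⟩
  have hmap1 : Filter.Tendsto (fun a : ℝ => 1 - a) (𝓝[>] (0:ℝ)) (𝓝[Set.Icc (0:ℝ) 1] 1) := by
    apply tendsto_nhdsWithin_of_tendsto_nhds_of_eventually_within
    · have : Filter.Tendsto (fun a : ℝ => 1 - a) (𝓝 0) (𝓝 (1 - 0)) :=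
        tendsto_const_nhds.sub tendsto_id
      simpa using this.mono_left nhdsWithin_le_nhds
    · filter_upwards [Ioo_mem_nhdsGT_of_mem (by norm_num : (0:ℝ) ∈ Set.Ico 0 1)] with a ha
      constructor <;> [linarith [ha.2]; linarith [ha.1]]
  have hP0 : P 0 = 0 := intervalIntegral.integral_same
  have t1 : Filter.Tendsto (fun a : ℝ => P a) (𝓝[>] (0:ℝ)) (𝓝 0) := by
    have := (hPc 0 ⟨le_rfl, zero_le_one⟩).tendsto.comp hmap0
    rwa [hP0] at this
  have t2 : Filter.Tendsto (fun a : ℝ => P (1 - a)) (𝓝[>] (0:ℝ))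
      (𝓝 (∫ x in (0:ℝ)..1, g x)) :=
    (hPc 1 ⟨zero_le_one, le_rfl⟩).tendsto.comp hmap1
  -- integral as difference of primitives, eventually
  have hIoohalf : Set.Ioo (0:ℝ) (1/2) ∈ 𝓝[>] (0:ℝ) :=
    Ioo_mem_nhdsGT_of_mem (by norm_num : (0:ℝ) ∈ Set.Ico 0 (1/2))
  have tint : Filter.Tendsto (fun a : ℝ => ∫ x in a..(1-a), g x) (𝓝[>] (0:ℝ))
      (𝓝 (∫ x in (0:ℝ)..1, g x)) := by
    have tt := t2.sub t1
    rw [sub_zero] at tt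
    refine tt.congr' ?_
    filter_upwards [hIoohalf] with a ha
    have hsub1 : IntervalIntegrable g volume 0 a := by
      apply (hgint.mono_set ?_).intervalIntegrable
      rw [Set.uIcc_of_le ha.1.le, Set.uIcc_of_le zero_le_one]
      exact Set.Icc_subset_Icc le_rfl (by linarith [ha.2])
    have hsub2 : IntervalIntegrable g volume 0 (1-a) := by
      apply (hgint.mono_set ?_).intervalIntegrable
      rw [Set.uIcc_of_le (by linarith [ha.2] : (0:ℝ) ≤ 1 - a), Set.uIcc_of_le zero_le_one]
      exact Set.Icc_subset_Icc le_rfl (by linarith [ha.1])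
    exact intervalIntegral.integral_interval_sub_left hsub2 hsub1
  -- boundary tendsto
  have hb0 : Filter.Tendsto
      (fun a : ℝ => v a ^ 2 * (Real.cos (π * a) / Real.sin (π * a))) (𝓝[>] (0:ℝ)) (𝓝 0) :=
    (boundary_limit v (v' 0) 0 (Or.inl rfl) (hv 0 ⟨le_rfl, zero_le_one⟩) hv0).mono_left
      (nhdsWithin_mono 0 (fun a (ha : 0 < a) => ha.ne'))
  have hb1 : Filter.Tendsto
      (fun a : ℝ => v (1-a) ^ 2 * (Real.cos (π * (1-a)) / Real.sin (π * (1-a))))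
      (𝓝[>] (0:ℝ)) (𝓝 0) := by
    have hbl := boundary_limit v (v' 1) 1 (Or.inr rfl) (hv 1 ⟨zero_le_one, le_rfl⟩) hv1
    have hm : Filter.Tendsto (fun a : ℝ => 1 - a) (𝓝[>] (0:ℝ)) (𝓝[≠] (1:ℝ)) := by
      apply tendsto_nhdsWithin_of_tendsto_nhds_of_eventually_within
      · have : Filter.Tendsto (fun a : ℝ => 1 - a) (𝓝 0) (𝓝 (1 - 0)) :=
          tendsto_const_nhds.sub tendsto_id
        simpa using this.mono_left nhdsWithin_le_nhds
      · filter_upwards [self_mem_nhdsWithin] with a (ha : 0 < a)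
        simp only [Set.mem_compl_iff, Set.mem_singleton_iff]
        intro h
        linarith [h]
    exact hbl.comp hm
  have tbdry : Filter.Tendsto
      (fun a : ℝ => π * ((v (1-a) ^ 2 * (Real.cos (π * (1-a)) / Real.sin (π * (1-a))))
        - (v a ^ 2 * (Real.cos (π * a) / Real.sin (π * a))))) (𝓝[>] (0:ℝ)) (𝓝 0) := by
    have := (hb1.sub hb0).const_mul π
    simpa using this
  -- eventual inequality
  have hev : ∀ᶠ a in 𝓝[>] (0:ℝ),
      π * ((v (1-a) ^ 2 * (Real.cos (π * (1-a)) / Real.sin (π * (1-a))))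
        - (v a ^ 2 * (Real.cos (π * a) / Real.sin (π * a))))
      ≤ ∫ x in a..(1-a), g x := by
    filter_upwards [hIoohalf] with a ha
    exact wirtinger_key v v' hv hv'c a (1-a) ha.1 (by linarith [ha.2]) (by linarith [ha.1])
  have hge : (0:ℝ) ≤ ∫ x in (0:ℝ)..1, g x :=
    le_of_tendsto_of_tendsto tbdry tint hev
  -- conclude
  have hv2int : IntervalIntegrable (fun x => v x ^ 2) volume 0 1 := by
    rw [intervalIntegrable_iff_integrableOn_Icc_of_le zero_le_one]
    exact (hvc.pow 2).integrableOn_compact isCompact_Icc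
  have hv'2int : IntervalIntegrable (fun x => v' x ^ 2) volume 0 1 := by
    rw [intervalIntegrable_iff_integrableOn_Icc_of_le zero_le_one]
    exact (hv'c.pow 2).integrableOn_compact isCompact_Icc
  have hsplit : ∫ x in (0:ℝ)..1, g x
      = (∫ x in (0:ℝ)..1, v' x ^ 2) - π ^ 2 * ∫ x in (0:ℝ)..1, v x ^ 2 := by
    rw [hg]
    rw [intervalIntegral.integral_sub hv'2int (hv2int.const_mul (π^2))]
    rw [intervalIntegral.integral_const_mul]
  rw [hsplit] at hge
  linarith
end Aux

section Main
open Set Filter Topology intervalIntegral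

/-- Coercivity (Poincaré-type lower bound) of the differential operator with involution
`L[v](x) = -v''(x) + ε v''(1-x)` under Dirichlet conditions `v(0) = v(1) = 0`. -/
theorem involution_operator_coercive (ε : ℝ) (hε : |ε| < 1)
    (v v' v'' : ℝ → ℝ)
    (hv' : ∀ x ∈ Set.Icc (0:ℝ) 1, HasDerivAt v (v' x) x)
    (hv'' : ∀ x ∈ Set.Icc (0:ℝ) 1, HasDerivAt v' (v'' x) x)
    (hv''cont : ContinuousOn v'' (Set.Icc (0:ℝ) 1))
    (hv0 : v 0 = 0) (hv1 : v 1 = 0) :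
    (1 - |ε|) * π ^ 2 * ∫ x in (0:ℝ)..1, (v x) ^ 2
      ≤ ∫ x in (0:ℝ)..1, (-(v'' x) + ε * v'' (1 - x)) * v x := by
  have hmem : ∀ x ∈ Set.Icc (0:ℝ) 1, (1 - x) ∈ Set.Icc (0:ℝ) 1 := by
    intro x hx
    exact ⟨by linarith [hx.2], by linarith [hx.1]⟩
  have hrefl : ContinuousOn (fun x : ℝ => 1 - x) (Set.Icc (0:ℝ) 1) :=
    (continuous_const.sub continuous_id).continuousOn
  have hvc : ContinuousOn v (Set.Icc (0:ℝ) 1) :=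
    fun x hx => (hv' x hx).continuousAt.continuousWithinAt
  have hv'c : ContinuousOn v' (Set.Icc (0:ℝ) 1) :=
    fun x hx => (hv'' x hx).continuousAt.continuousWithinAt
  have huIcc : Set.uIcc (0:ℝ) 1 = Set.Icc (0:ℝ) 1 := Set.uIcc_of_le zero_le_one
  -- generic integrability helper
  have hii : ∀ f : ℝ → ℝ, ContinuousOn f (Set.Icc (0:ℝ) 1) →
      IntervalIntegrable f volume 0 1 := by
    intro f hf
    rw [intervalIntegrable_iff_integrableOn_Icc_of_le zero_le_one]
    exact hf.integrableOn_compact isCompact_Icc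
  have hv''refl : ContinuousOn (fun x => v'' (1 - x)) (Set.Icc (0:ℝ) 1) :=
    hv''cont.comp hrefl hmem
  have hv'refl : ContinuousOn (fun x => v' (1 - x)) (Set.Icc (0:ℝ) 1) :=
    hv'c.comp hrefl hmem
  have hvrefl : ContinuousOn (fun x => v (1 - x)) (Set.Icc (0:ℝ) 1) :=
    hvc.comp hrefl hmem
  -- step 1: ∫ v'' v = - ∫ v'^2
  have eq1 : ∫ x in (0:ℝ)..1, v'' x * v x = - ∫ x in (0:ℝ)..1, v' x ^ 2 := by
    have hD : ∀ x ∈ Set.uIcc (0:ℝ) 1,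
        HasDerivAt (fun x => v' x * v x) (v'' x * v x + v' x ^ 2) x := by
      intro x hx
      rw [huIcc] at hx
      have := (hv'' x hx).fun_mul (hv' x hx)
      simpa [sq] using this
    have hint : IntervalIntegrable (fun x => v'' x * v x + v' x ^ 2) volume 0 1 :=
      hii _ ((hv''cont.mul hvc).add (hv'c.pow 2))
    have := intervalIntegral.integral_eq_sub_of_hasDerivAt hD hint
    rw [hv0, hv1, mul_zero, mul_zero, sub_zero] at this
    rw [intervalIntegral.integral_add (hii (fun x => v'' x * v x) (hv''cont.mul hvc))
      (hii (fun x => v' x ^ 2) (hv'c.pow 2))] at this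
    linarith
  -- step 2: ∫ v''(1-x) v x = ∫ v' x * v'(1-x)
  have eq2 : ∫ x in (0:ℝ)..1, v'' (1 - x) * v x
      = ∫ x in (0:ℝ)..1, v' x * v' (1 - x) := by
    have hflip : ∫ x in (0:ℝ)..1, v'' (1 - x) * v x
        = ∫ x in (0:ℝ)..1, v'' x * v (1 - x) := by
      have := intervalIntegral.integral_comp_sub_left (fun y => v'' y * v (1 - y)) 1
        (a := 0) (b := 1)
      simp only [sub_zero, sub_self] at this
      calc ∫ x in (0:ℝ)..1, v'' (1 - x) * v x
          = ∫ x in (0:ℝ)..1, v'' (1 - x) * v (1 - (1 - x)) := by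
            congr 1; ext x; congr 2; ring
        _ = ∫ x in (0:ℝ)..1, v'' x * v (1 - x) := this
    have hD : ∀ x ∈ Set.uIcc (0:ℝ) 1,
        HasDerivAt (fun x => v' x * v (1 - x))
          (v'' x * v (1 - x) - v' x * v' (1 - x)) x := by
      intro x hx
      rw [huIcc] at hx
      have hcomp : HasDerivAt (fun x : ℝ => v (1 - x)) (-v' (1 - x)) x := by
        have h1 : HasDerivAt (fun x : ℝ => 1 - x) (-1) x := by
          simpa using (hasDerivAt_id x).const_sub 1
        have := (hv' (1 - x) (hmem x hx)).comp x h1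
        simpa [Function.comp_def] using this
      have := (hv'' x hx).fun_mul hcomp
      exact this.congr_deriv (by ring)
    have hint : IntervalIntegrable
        (fun x => v'' x * v (1 - x) - v' x * v' (1 - x)) volume 0 1 :=
      hii _ ((hv''cont.mul hvrefl).sub (hv'c.mul hv'refl))
    have hftc := intervalIntegral.integral_eq_sub_of_hasDerivAt hD hint
    norm_num [hv0, hv1] at hftc
    rw [intervalIntegral.integral_sub (hii (fun x => v'' x * v (1 - x)) (hv''cont.mul hvrefl))
      (hii (fun x => v' x * v' (1 - x)) (hv'c.mul hv'refl))] at hftc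
    rw [hflip]
    linarith
  -- step 3: reflection of v'^2
  have eq3 : ∫ x in (0:ℝ)..1, v' (1 - x) ^ 2 = ∫ x in (0:ℝ)..1, v' x ^ 2 := by
    have := intervalIntegral.integral_comp_sub_left (fun y => v' y ^ 2) 1 (a := 0) (b := 1)
    simpa using this
  -- step 4: cross term bound
  have ineq4 : -(|ε| * ∫ x in (0:ℝ)..1, v' x ^ 2)
      ≤ ε * ∫ x in (0:ℝ)..1, v' x * v' (1 - x) := by
    have hnn : (0:ℝ) ≤ ∫ x in (0:ℝ)..1,
        (ε * (v' x * v' (1 - x)) + |ε|/2 * v' x ^ 2 + |ε|/2 * v' (1 - x) ^ 2) := by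
      apply intervalIntegral.integral_nonneg zero_le_one
      intro x hx
      rcases abs_cases ε with ⟨h1, _⟩ | ⟨h1, _⟩ <;>
        nlinarith [sq_nonneg (v' x + v' (1 - x)), sq_nonneg (v' x - v' (1 - x))]
    have hi1 : IntervalIntegrable (fun x => ε * (v' x * v' (1 - x))) volume 0 1 :=
      (hii _ (hv'c.mul hv'refl)).const_mul ε
    have hi2 : IntervalIntegrable (fun x => |ε|/2 * v' x ^ 2) volume 0 1 :=
      (hii _ (hv'c.pow 2)).const_mul _
    have hi3 : IntervalIntegrable (fun x => |ε|/2 * v' (1 - x) ^ 2) volume 0 1 :=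
      (hii _ (hv'refl.pow 2)).const_mul _
    rw [intervalIntegral.integral_add (hi1.add hi2) hi3,
      intervalIntegral.integral_add hi1 hi2,
      intervalIntegral.integral_const_mul, intervalIntegral.integral_const_mul,
      intervalIntegral.integral_const_mul, eq3] at hnn
    linarith
  -- rewrite the target integral
  have hsplit : ∫ x in (0:ℝ)..1, (-(v'' x) + ε * v'' (1 - x)) * v x
      = (∫ x in (0:ℝ)..1, v' x ^ 2) + ε * ∫ x in (0:ℝ)..1, v' x * v' (1 - x) := by
    have : (fun x => (-(v'' x) + ε * v'' (1 - x)) * v x)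
        = fun x => -(v'' x * v x) + ε * (v'' (1 - x) * v x) := by
      ext x; ring
    rw [this, intervalIntegral.integral_add (hii (fun x => -(v'' x * v x)) ((hv''cont.mul hvc).neg))
      ((hii (fun x => v'' (1 - x) * v x) (hv''refl.mul hvc)).const_mul ε),
      intervalIntegral.integral_neg, intervalIntegral.integral_const_mul, eq1, eq2]
    ring
  have hwirt := wirtinger v v' hv' hv'c hv0 hv1
  have h1ε : 0 ≤ 1 - |ε| := by linarith
  rw [hsplit]
  calc (1 - |ε|) * π ^ 2 * ∫ x in (0:ℝ)..1, (v x) ^ 2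
      = (1 - |ε|) * (π ^ 2 * ∫ x in (0:ℝ)..1, (v x) ^ 2) := by ring
    _ ≤ (1 - |ε|) * ∫ x in (0:ℝ)..1, v' x ^ 2 := by
        exact mul_le_mul_of_nonneg_left hwirt h1ε
    _ ≤ (∫ x in (0:ℝ)..1, v' x ^ 2) + ε * ∫ x in (0:ℝ)..1, v' x * v' (1 - x) := by
        nlinarith [ineq4]

end Main
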